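/- Let n ≥ 2, c ∈ ℝⁿ, R > 0, and let T(x) = c + R²(x − c)/‖x − c‖² be the inversion in the sphere of center c and radius R. Let f : ℝ/ℤ → ℝⁿ be differentiable at θ₁ and at θ₂, with f(θ₁) ≠ f(θ₂), f(θ₁) ≠ c and f(θ₂) ≠ c. Then ‖(T∘f)'(θ₁)‖ ‖(T∘f)'(θ₂)‖ / ‖T(f(θ₁)) − T(f(θ₂))‖² = ‖f'(θ₁)‖ ‖f'(θ₂)‖ / ‖f(θ₁) − f(θ₂)‖²; that is, the two-point function g(θ₁,θ₂) = ‖f'(θ₁)‖‖f'(θ₂)‖/‖f(θ₁) − f(θ₂)‖² associated to a parametrized curve is invariant under sphere inversions. -/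

import Mathlib

open MeasureTheory Real
open scoped RealInnerProductSpace

noncomputable section

section Aux

variable {E : Type*} [NormedAddCommGroup E] [InnerProductSpace ℝ E]

lemma inv_dist_sq_aux (a b : E) (ha : a ≠ 0) (hb : b ≠ 0) :
    ‖(‖a‖^2)⁻¹ • a - (‖b‖^2)⁻¹ • b‖^2 = ‖a - b‖^2 / (‖a‖^2 * ‖b‖^2) := by
  have ha' : (0:ℝ) < ‖a‖ := norm_pos_iff.mpr ha
  have hb' : (0:ℝ) < ‖b‖ := norm_pos_iff.mpr hb
  rw [@norm_sub_sq_real, @norm_sub_sq_real]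
  simp only [norm_smul, real_inner_smul_left, real_inner_smul_right,
    real_inner_self_eq_norm_sq, Real.norm_eq_abs, abs_inv, abs_pow, abs_norm, mul_pow]
  field_simp
  ring

lemma inv_hasDerivAt_aux {g : ℝ → E} {θ : ℝ} {v : E} (hg : HasDerivAt g v θ)
    (h0 : g θ ≠ 0) :
    HasDerivAt (fun t => (‖g t‖^2)⁻¹ • g t)
      ((‖g θ‖^2)⁻¹ • v - ((2 * ⟪g θ, v⟫) / ‖g θ‖^4) • g θ) θ := by
  have hn : (‖g θ‖:ℝ)^2 ≠ 0 := pow_ne_zero _ (norm_ne_zero_iff.mpr h0)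
  have hinner : HasDerivAt (fun t => ⟪g t, g t⟫) (⟪g θ, v⟫ + ⟪v, g θ⟫) θ := hg.inner ℝ hg
  have hns : HasDerivAt (fun t => ‖g t‖^2) (2 * ⟪g θ, v⟫) θ := by
    have : (fun t => ‖g t‖^2) = fun t => ⟪g t, g t⟫ := by
      funext t; rw [real_inner_self_eq_norm_sq]
    rw [this]
    convert hinner using 1
    rw [real_inner_comm]; ring
  have hinv := hns.inv hn
  have := hinv.smul hg
  convert this using 1
  · rfl
  rw [sub_eq_add_neg, ← neg_smul]
  congr 1
  field_simp

lemma inv_deriv_norm_sq_aux (u v : E) (hu : u ≠ 0) :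
    ‖(‖u‖^2)⁻¹ • v - ((2 * ⟪u, v⟫) / ‖u‖^4) • u‖^2 = ‖v‖^2 / ‖u‖^4 := by
  have hu' : (0:ℝ) < ‖u‖ := norm_pos_iff.mpr hu
  rw [@norm_sub_sq_real]
  simp only [norm_smul, real_inner_smul_left, real_inner_smul_right,
    real_inner_self_eq_norm_sq, Real.norm_eq_abs, abs_inv, abs_pow, abs_norm, mul_pow,
    abs_div, abs_mul]
  rw [abs_of_nonneg (by norm_num : (0:ℝ) ≤ 2)]
  rcases abs_cases (⟪u, v⟫ : ℝ) with ⟨h, _⟩ | ⟨h, _⟩ <;> rw [h] <;>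
    rw [real_inner_comm v u] <;> field_simp <;> ring

lemma main_aux
    (c : E) (R : ℝ) (hR : 0 < R)
    (f : ℝ → E) (θ₁ θ₂ : ℝ)
    (h₁ : DifferentiableAt ℝ f θ₁) (h₂ : DifferentiableAt ℝ f θ₂)
    (hne : f θ₁ ≠ f θ₂) (hc₁ : f θ₁ ≠ c) (hc₂ : f θ₂ ≠ c) :
    ‖deriv ((fun x => c + (R ^ 2 / ‖x - c‖ ^ 2) • (x - c)) ∘ f) θ₁‖ *
        ‖deriv ((fun x => c + (R ^ 2 / ‖x - c‖ ^ 2) • (x - c)) ∘ f) θ₂‖ /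
        ‖(c + (R ^ 2 / ‖f θ₁ - c‖ ^ 2) • (f θ₁ - c))
          - (c + (R ^ 2 / ‖f θ₂ - c‖ ^ 2) • (f θ₂ - c))‖ ^ 2
      = ‖deriv f θ₁‖ * ‖deriv f θ₂‖ / ‖f θ₁ - f θ₂‖ ^ 2 := by
  set g : ℝ → E := fun t => f t - c with hg_def
  have hg₁ : g θ₁ ≠ 0 := sub_ne_zero.mpr hc₁
  have hg₂ : g θ₂ ≠ 0 := sub_ne_zero.mpr hc₂
  have hgn₁ : (0:ℝ) < ‖g θ₁‖ := norm_pos_iff.mpr hg₁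
  have hgn₂ : (0:ℝ) < ‖g θ₂‖ := norm_pos_iff.mpr hg₂
  have hTf : ((fun x => c + (R ^ 2 / ‖x - c‖ ^ 2) • (x - c)) ∘ f)
      = fun t => c + (R^2) • ((‖g t‖^2)⁻¹ • g t) := by
    funext t
    simp only [Function.comp, hg_def, div_eq_mul_inv, mul_comm (R^2), mul_smul]
    module
  have key : ∀ (θ : ℝ), DifferentiableAt ℝ f θ → f θ ≠ c →
      ‖deriv ((fun x => c + (R ^ 2 / ‖x - c‖ ^ 2) • (x - c)) ∘ f) θ‖
        = R^2 * ‖deriv f θ‖ / ‖g θ‖^2 := by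
    intro θ hdf hfc
    have hgθ : g θ ≠ 0 := sub_ne_zero.mpr hfc
    have hgnθ : (0:ℝ) < ‖g θ‖ := norm_pos_iff.mpr hgθ
    have hdg : HasDerivAt g (deriv f θ) θ := (hdf.hasDerivAt.sub_const c)
    have hD := inv_hasDerivAt_aux hdg hgθ
    have hD2 : HasDerivAt ((fun x => c + (R ^ 2 / ‖x - c‖ ^ 2) • (x - c)) ∘ f)
        ((R^2) • ((‖g θ‖^2)⁻¹ • deriv f θ - ((2 * ⟪g θ, deriv f θ⟫) / ‖g θ‖^4) • g θ)) θ := by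
      rw [hTf]
      exact (hD.const_smul (R^2)).const_add c
    rw [hD2.deriv, norm_smul, Real.norm_eq_abs, abs_of_pos (by positivity : (0:ℝ) < R^2)]
    have hsq := inv_deriv_norm_sq_aux (g θ) (deriv f θ) hgθ
    have hsq' : ‖(‖g θ‖^2)⁻¹ • deriv f θ - ((2 * ⟪g θ, deriv f θ⟫) / ‖g θ‖^4) • g θ‖^2
        = (‖deriv f θ‖ / ‖g θ‖^2)^2 := by
      rw [hsq, div_pow, ← pow_mul]
    have hnn : ‖(‖g θ‖^2)⁻¹ • deriv f θ - ((2 * ⟪g θ, deriv f θ⟫) / ‖g θ‖^4) • g θ‖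
        = ‖deriv f θ‖ / ‖g θ‖^2 := by
      calc ‖(‖g θ‖^2)⁻¹ • deriv f θ - ((2 * ⟪g θ, deriv f θ⟫) / ‖g θ‖^4) • g θ‖
          = Real.sqrt (‖(‖g θ‖^2)⁻¹ • deriv f θ
              - ((2 * ⟪g θ, deriv f θ⟫) / ‖g θ‖^4) • g θ‖^2) :=
            (Real.sqrt_sq (norm_nonneg _)).symm
        _ = Real.sqrt ((‖deriv f θ‖ / ‖g θ‖^2)^2) := by rw [hsq']
        _ = ‖deriv f θ‖ / ‖g θ‖^2 := Real.sqrt_sq (by positivity)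
    rw [hnn]
    field_simp
  have hdist : ‖(c + (R ^ 2 / ‖f θ₁ - c‖ ^ 2) • (f θ₁ - c))
          - (c + (R ^ 2 / ‖f θ₂ - c‖ ^ 2) • (f θ₂ - c))‖^2
      = R^4 * ‖f θ₁ - f θ₂‖^2 / (‖g θ₁‖^2 * ‖g θ₂‖^2) := by
    have hT12 : (c + (R ^ 2 / ‖f θ₁ - c‖ ^ 2) • (f θ₁ - c))
          - (c + (R ^ 2 / ‖f θ₂ - c‖ ^ 2) • (f θ₂ - c))
        = (R^2) • ((‖g θ₁‖^2)⁻¹ • g θ₁ - (‖g θ₂‖^2)⁻¹ • g θ₂) := by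
      simp only [hg_def, div_eq_mul_inv, mul_comm (R^2), mul_smul, smul_sub,
        add_sub_add_left_eq_sub]
      module
    rw [hT12, norm_smul, Real.norm_eq_abs, abs_of_pos (by positivity : (0:ℝ) < R^2),
      mul_pow, inv_dist_sq_aux (g θ₁) (g θ₂) hg₁ hg₂]
    have hgg : g θ₁ - g θ₂ = f θ₁ - f θ₂ := by simp [hg_def]
    rw [hgg]
    ring
  rw [key θ₁ h₁ hc₁, key θ₂ h₂ hc₂, hdist]
  have hd : (0:ℝ) < ‖f θ₁ - f θ₂‖ := norm_pos_iff.mpr (sub_ne_zero.mpr hne)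
  have hR' : R ≠ 0 := ne_of_gt hR
  field_simp

end Aux

/-- The two-point function `g(θ₁,θ₂) = ‖f'(θ₁)‖‖f'(θ₂)‖/‖f(θ₁) - f(θ₂)‖²`
of a parametrized curve is invariant under the inversion
`T(x) = c + R²(x - c)/‖x - c‖²` in a sphere. -/
theorem two_point_function_inversion_invariant
    (n : ℕ) (hn : 2 ≤ n)
    (c : EuclideanSpace ℝ (Fin n)) (R : ℝ) (hR : 0 < R)
    (f : ℝ → EuclideanSpace ℝ (Fin n))
    (hper : ∀ θ : ℝ, f (θ + 1) = f θ)
    (θ₁ θ₂ : ℝ)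
    (h₁ : DifferentiableAt ℝ f θ₁) (h₂ : DifferentiableAt ℝ f θ₂)
    (hne : f θ₁ ≠ f θ₂) (hc₁ : f θ₁ ≠ c) (hc₂ : f θ₂ ≠ c) :
    letI T : EuclideanSpace ℝ (Fin n) → EuclideanSpace ℝ (Fin n) :=
      fun x => c + (R ^ 2 / ‖x - c‖ ^ 2) • (x - c)
    ‖deriv (T ∘ f) θ₁‖ * ‖deriv (T ∘ f) θ₂‖ / ‖T (f θ₁) - T (f θ₂)‖ ^ 2
      = ‖deriv f θ₁‖ * ‖deriv f θ₂‖ / ‖f θ₁ - f θ₂‖ ^ 2 :=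
  main_aux c R hR f θ₁ θ₂ h₁ h₂ hne hc₁ hc₂

end
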